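/- Let U be an n×n upper triangular real matrix with positive diagonal entries u_{ii}, and let a_1,...,a_n ∈ (0,∞]. Then ∫_{-a_n}^{a_n} ··· ∫_{-a_1}^{a_1} exp(-‖Uξ‖₂²) dξ_1 ··· dξ_n ≤ ∏_{i=1}^n ∫_{-a_i}^{a_i} exp(-u_{ii}² t²) dt. -/

import Mathlib

open MeasureTheory Real Finset
open scoped ENNReal NNReal

lemma oneD (b c : ℝ) (hb : 0 ≤ b) (hc : 0 ≤ c) :
    (∫ s in (-b + c)..(b + c), Real.exp (-s ^ 2)) ≤ ∫ s in (-b)..b, Real.exp (-s ^ 2) := by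
  have hcont : Continuous fun s : ℝ => Real.exp (-s ^ 2) := by fun_prop
  have hint : ∀ x y : ℝ, IntervalIntegrable (fun s => Real.exp (-s ^ 2)) volume x y :=
    fun x y => hcont.intervalIntegrable x y
  have h1 : (∫ s in (-b + c)..(b + c), Real.exp (-s ^ 2))
      = (∫ s in (-b + c)..b, Real.exp (-s ^ 2)) + ∫ s in b..(b + c), Real.exp (-s ^ 2) :=
    (intervalIntegral.integral_add_adjacent_intervals (hint _ _) (hint _ _)).symm
  have h2 : (∫ s in (-b)..b, Real.exp (-s ^ 2))
      = (∫ s in (-b)..(-b + c), Real.exp (-s ^ 2)) + ∫ s in (-b + c)..b, Real.exp (-s ^ 2) :=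
    (intervalIntegral.integral_add_adjacent_intervals (hint _ _) (hint _ _)).symm
  have h3 : (∫ s in (-b)..(-b + c), Real.exp (-s ^ 2))
      = ∫ s in (b - c)..b, Real.exp (-s ^ 2) := by
    have := intervalIntegral.integral_comp_neg (a := b - c) (b := b)
      (fun s : ℝ => Real.exp (-s ^ 2))
    simp only [neg_sq] at this
    rw [show -(b - c) = -b + c by ring] at this
    exact this.symm
  have h4 : (∫ s in b..(b + c), Real.exp (-s ^ 2))
      = ∫ s in (b - c)..b, Real.exp (-(2 * b - s) ^ 2) := by
    have := intervalIntegral.integral_comp_sub_left (a := b - c) (b := b)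
      (fun s : ℝ => Real.exp (-s ^ 2)) (2 * b)
    rw [show 2 * b - b = b by ring, show 2 * b - (b - c) = b + c by ring] at this
    exact this.symm
  have h5 : (∫ s in (b - c)..b, Real.exp (-(2 * b - s) ^ 2))
      ≤ ∫ s in (b - c)..b, Real.exp (-s ^ 2) := by
    apply intervalIntegral.integral_mono_on (by linarith)
    · exact ((hcont.comp (by fun_prop : Continuous fun s : ℝ => 2 * b - s))).intervalIntegrable _ _
    · exact hint _ _
    · intro x hx
      apply Real.exp_le_exp.2
      nlinarith [hx.1, hx.2]
  linarith [h4 ▸ h5]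

lemma oneD' (b c : ℝ) (hb : 0 ≤ b) :
    (∫ s in (-b + c)..(b + c), Real.exp (-s ^ 2)) ≤ ∫ s in (-b)..b, Real.exp (-s ^ 2) := by
  rcases le_or_gt 0 c with hc | hc
  · exact oneD b c hb hc
  · have h : (∫ s in (-b + c)..(b + c), Real.exp (-s ^ 2))
        = ∫ s in (-b + -c)..(b + -c), Real.exp (-s ^ 2) := by
      have := intervalIntegral.integral_comp_neg (a := -b + -c) (b := b + -c)
        (fun s : ℝ => Real.exp (-s ^ 2))
      simp only [neg_sq] at this
      rw [show -(b + -c) = -b + c by ring, show -(-b + -c) = b + c by ring] at this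
      exact this.symm
    rw [h]
    exact oneD b (-c) hb (by linarith)

lemma keyIcc (u c a : ℝ) (hu : 0 < u) (ha : 0 < a) :
    (∫ t in Set.Icc (-a) a, Real.exp (-(u * t + c) ^ 2))
      ≤ ∫ t in Set.Icc (-a) a, Real.exp (-(u * t) ^ 2) := by
  have hle : (-a : ℝ) ≤ a := by linarith
  have e1 : ∀ g : ℝ → ℝ, (∫ t in Set.Icc (-a) a, g t) = ∫ t in (-a)..a, g t := by
    intro g
    rw [MeasureTheory.integral_Icc_eq_integral_Ioc, ← intervalIntegral.integral_of_le hle]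
  rw [e1, e1]
  have hL := intervalIntegral.integral_comp_mul_add (a := -a) (b := a)
    (fun s : ℝ => Real.exp (-s ^ 2)) hu.ne' c
  have hR := intervalIntegral.integral_comp_mul_left (a := -a) (b := a)
    (fun s : ℝ => Real.exp (-s ^ 2)) (c := u) hu.ne'
  rw [hL, hR]
  rw [show u * -a + c = -(u * a) + c by ring, show u * a + c = u * a + c from rfl,
    show u * -a = -(u * a) by ring]
  have := oneD' (u * a) c (by positivity)
  simp only [smul_eq_mul]
  have hinv : (0:ℝ) ≤ u⁻¹ := by positivity
  exact mul_le_mul_of_nonneg_left this hinv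

lemma keyL (u c : ℝ) (hu : 0 < u) (S : Set ℝ)
    (hS : (∃ a : ℝ, 0 < a ∧ S = Set.Icc (-a) a) ∨ S = Set.univ) :
    (∫⁻ t in S, ENNReal.ofReal (Real.exp (-(u * t + c) ^ 2)))
      ≤ ∫⁻ t in S, ENNReal.ofReal (Real.exp (-(u * t) ^ 2)) := by
  rcases hS with ⟨a, ha, rfl⟩ | rfl
  · have hc1 : Continuous fun t : ℝ => Real.exp (-(u * t + c) ^ 2) := by fun_prop
    have hc2 : Continuous fun t : ℝ => Real.exp (-(u * t) ^ 2) := by fun_prop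
    have hi1 : IntegrableOn (fun t : ℝ => Real.exp (-(u * t + c) ^ 2)) (Set.Icc (-a) a) :=
      hc1.integrableOn_Icc
    have hi2 : IntegrableOn (fun t : ℝ => Real.exp (-(u * t) ^ 2)) (Set.Icc (-a) a) :=
      hc2.integrableOn_Icc
    rw [← ofReal_integral_eq_lintegral_ofReal hi1
        (Filter.Eventually.of_forall fun t => (Real.exp_pos _).le),
      ← ofReal_integral_eq_lintegral_ofReal hi2
        (Filter.Eventually.of_forall fun t => (Real.exp_pos _).le)]
    exact ENNReal.ofReal_le_ofReal (keyIcc u c a hu ha)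
  · rw [Measure.restrict_univ]
    apply le_of_eq
    have : ∀ t : ℝ, u * t + c = u * (t + c / u) := by
      intro t; field_simp
    calc (∫⁻ t, ENNReal.ofReal (Real.exp (-(u * t + c) ^ 2)))
        = ∫⁻ t, ENNReal.ofReal (Real.exp (-(u * (t + c / u)) ^ 2)) := by
          simp_rw [this]
      _ = ∫⁻ t, ENNReal.ofReal (Real.exp (-(u * t) ^ 2)) :=
          lintegral_add_right_eq_self (fun t => ENNReal.ofReal (Real.exp (-(u * t) ^ 2))) (c / u)

lemma piRestrict {ι : Type*} [Fintype ι] {α : ι → Type*} [∀ i, MeasurableSpace (α i)]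
    (μ : ∀ i, Measure (α i)) [∀ i, SigmaFinite (μ i)] (s : ∀ i, Set (α i))
    (hs : ∀ i, MeasurableSet (s i)) :
    (Measure.pi μ).restrict (Set.univ.pi s) = Measure.pi (fun i => (μ i).restrict (s i)) := by
  refine (Measure.pi_eq (μ := fun i => (μ i).restrict (s i)) fun t ht => ?_).symm ▸ rfl
  rw [Measure.restrict_apply (MeasurableSet.univ_pi ht), ← Set.pi_inter_distrib, Measure.pi_pi]
  exact Finset.prod_congr rfl fun i _ => (Measure.restrict_apply (ht i)).symm

lemma contAux (n : ℕ) (U : Matrix (Fin n) (Fin n) ℝ) :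
    Continuous fun ξ : Fin n → ℝ => Real.exp (-(∑ i, (U.mulVec ξ i) ^ 2)) := by
  have h1 : ∀ i, Continuous fun ξ : Fin n → ℝ => U.mulVec ξ i := by
    intro i
    simp only [Matrix.mulVec, dotProduct]
    exact continuous_finset_sum _ fun j _ => continuous_const.mul (continuous_apply j)
  have h2 : Continuous fun ξ : Fin n → ℝ => ∑ i, (U.mulVec ξ i) ^ 2 :=
    continuous_finset_sum _ fun i _ => (h1 i).pow 2
  exact Real.continuous_exp.comp h2.neg

lemma auxL : ∀ (n : ℕ) (U : Matrix (Fin n) (Fin n) ℝ), U.BlockTriangular id →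
    (∀ i, 0 < U i i) → ∀ S : Fin n → Set ℝ,
    (∀ i, (∃ c : ℝ, 0 < c ∧ S i = Set.Icc (-c) c) ∨ S i = Set.univ) →
    (∫⁻ ξ in Set.univ.pi S, ENNReal.ofReal (Real.exp (-(∑ i, (U.mulVec ξ i) ^ 2))))
      ≤ ∏ i, ∫⁻ t in S i, ENNReal.ofReal (Real.exp (-(U i i) ^ 2 * t ^ 2)) := by
  intro n
  induction n with
  | zero =>
      intro U hU hd S hS
      simp only [Finset.univ_eq_empty, Finset.sum_empty, Finset.prod_empty, neg_zero,
        Real.exp_zero, ENNReal.ofReal_one]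
      calc (∫⁻ _ in Set.univ.pi S, (1 : ℝ≥0∞)) = volume (Set.univ.pi S) := by
            rw [setLIntegral_one]
        _ ≤ volume (Set.univ : Set (Fin 0 → ℝ)) := measure_mono (Set.subset_univ _)
        _ = 1 := by
            rw [volume_pi, Measure.pi_univ]
            simp
  | succ n IH =>
      intro U hU hd S hS
      have hSm : ∀ i, MeasurableSet (S i) := by
        intro i
        rcases hS i with ⟨c, _, h⟩ | h <;> rw [h]
        · exact measurableSet_Icc
        · exact MeasurableSet.univ
      set μ : Fin (n + 1) → Measure ℝ := fun i => volume.restrict (S i) with hμ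
      set F : (Fin (n + 1) → ℝ) → ℝ≥0∞ :=
        fun ξ => ENNReal.ofReal (Real.exp (-(∑ i, (U.mulVec ξ i) ^ 2))) with hF
      have hFm : Measurable F :=
        ENNReal.measurable_ofReal.comp (contAux (n + 1) U).measurable
      set U' : Matrix (Fin n) (Fin n) ℝ := U.submatrix Fin.succ Fin.succ with hU'def
      set C : (Fin n → ℝ) → ℝ := fun y => ∑ j, U 0 j.succ * y j with hC
      have hCm : Measurable C := by
        apply Finset.measurable_sum
        intro j _
        exact (measurable_const.mul (measurable_pi_apply j))
      -- value computation
      have hval : ∀ (x : ℝ) (y : Fin n → ℝ),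
          (∑ i, (U.mulVec ((MeasurableEquiv.piFinSuccAbove (fun _ : Fin (n+1) => ℝ) 0).symm (x, y)) i) ^ 2)
            = (U 0 0 * x + C y) ^ 2 + ∑ i, (U'.mulVec y i) ^ 2 := by
        intro x y
        set ξ := (MeasurableEquiv.piFinSuccAbove (fun _ : Fin (n+1) => ℝ) 0).symm (x, y) with hξ
        have hx0 : ξ 0 = x := by simp [hξ, MeasurableEquiv.piFinSuccAbove]
        have hxs : ∀ j : Fin n, ξ j.succ = y j := by
          intro j
          simp [hξ, MeasurableEquiv.piFinSuccAbove]
        rw [Fin.sum_univ_succ]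
        have hrow0 : U.mulVec ξ 0 = U 0 0 * x + C y := by
          simp only [Matrix.mulVec, dotProduct, hC]
          rw [Fin.sum_univ_succ, hx0]
          simp only [hxs]
        have hrows : ∀ i : Fin n, U.mulVec ξ i.succ = U'.mulVec y i := by
          intro i
          simp only [Matrix.mulVec, dotProduct, hU'def, Matrix.submatrix_apply]
          rw [Fin.sum_univ_succ]
          have h0 : U i.succ 0 = 0 := hU (by simp [Fin.succ_pos])
          rw [h0, zero_mul, zero_add]
          simp only [hxs]
        rw [hrow0]
        congr 1
        exact Finset.sum_congr rfl fun i _ => by rw [hrows i]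
      -- measure rewriting
      have hrestr : (volume : Measure (Fin (n + 1) → ℝ)).restrict (Set.univ.pi S)
          = Measure.pi μ := by
        rw [volume_pi]
        exact piRestrict _ S hSm
      have hmp := measurePreserving_piFinSuccAbove μ 0
      set e := MeasurableEquiv.piFinSuccAbove (fun _ : Fin (n + 1) => ℝ) 0 with he
      have hcomp : (∫⁻ ξ in Set.univ.pi S, F ξ)
          = ∫⁻ p, F (e.symm p) ∂((μ 0).prod (Measure.pi fun j => μ ((0 : Fin (n+1)).succAbove j))) := by
        rw [hrestr]
        have h := hmp.lintegral_comp (f := fun p => F (e.symm p)) (hFm.comp e.symm.measurable)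
        simp only [MeasurableEquiv.symm_apply_apply] at h
        exact h
      rw [hcomp]
      set ρ : Measure (Fin n → ℝ) := Measure.pi fun j => μ ((0 : Fin (n+1)).succAbove j) with hρ
      have hprod : (∫⁻ p, F (e.symm p) ∂((μ 0).prod ρ))
          = ∫⁻ y, ∫⁻ x, F (e.symm (x, y)) ∂(μ 0) ∂ρ :=
        lintegral_prod_symm _ (hFm.comp e.symm.measurable).aemeasurable
      rw [hprod]
      set K : (Fin n → ℝ) → ℝ≥0∞ :=
        fun y => ENNReal.ofReal (Real.exp (-(∑ i, (U'.mulVec y i) ^ 2))) with hK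
      have hKm : Measurable K := ENNReal.measurable_ofReal.comp (contAux n U').measurable
      set I0 : ℝ≥0∞ := ∫⁻ t in S 0, ENNReal.ofReal (Real.exp (-(U 0 0) ^ 2 * t ^ 2)) with hI0
      have hFsplit : ∀ (x : ℝ) (y : Fin n → ℝ), F (e.symm (x, y))
          = ENNReal.ofReal (Real.exp (-(U 0 0 * x + C y) ^ 2)) * K y := by
        intro x y
        simp only [hF, hK]
        rw [hval x y, neg_add, Real.exp_add, ENNReal.ofReal_mul (Real.exp_pos _).le]
      have hstepA : ∀ y : Fin n → ℝ, (∫⁻ x, F (e.symm (x, y)) ∂(μ 0)) ≤ I0 * K y := by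
        intro y
        have hmx : Measurable fun x : ℝ =>
            ENNReal.ofReal (Real.exp (-(U 0 0 * x + C y) ^ 2)) :=
          ENNReal.measurable_ofReal.comp (by fun_prop : Continuous fun x : ℝ =>
            Real.exp (-(U 0 0 * x + C y) ^ 2)).measurable
        calc (∫⁻ x, F (e.symm (x, y)) ∂(μ 0))
            = ∫⁻ x, ENNReal.ofReal (Real.exp (-(U 0 0 * x + C y) ^ 2)) * K y ∂(μ 0) := by
              simp_rw [hFsplit]
          _ = (∫⁻ x, ENNReal.ofReal (Real.exp (-(U 0 0 * x + C y) ^ 2)) ∂(μ 0)) * K y :=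
              lintegral_mul_const _ hmx
          _ ≤ I0 * K y := by
              refine mul_le_mul_left ?_ _
              have hkey := keyL (U 0 0) (C y) (hd 0) (S 0) (hS 0)
              have heq : (∫⁻ t in S 0, ENNReal.ofReal (Real.exp (-(U 0 0 * t) ^ 2)))
                  = I0 := by
                rw [hI0]
                exact lintegral_congr fun t => by rw [mul_pow, neg_mul]
              rw [hμ]
              rw [← heq]
              exact hkey
      have hU't : U'.BlockTriangular id := by
        intro i j h
        simp only [hU'def, Matrix.submatrix_apply]
        exact hU (by simpa using Fin.succ_lt_succ_iff.mpr (by simpa using h))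
      have hd' : ∀ i, 0 < U' i i := fun i => by
        simp only [hU'def, Matrix.submatrix_apply]; exact hd i.succ
      have hρeq : ρ = volume.restrict (Set.univ.pi fun j : Fin n => S j.succ) := by
        have h1 : (fun j : Fin n => μ ((0 : Fin (n+1)).succAbove j))
            = fun j => (volume : Measure ℝ).restrict (S j.succ) := by
          funext j; rw [hμ]; simp [Fin.succAbove_zero]
        have h2 := piRestrict (fun _ : Fin n => (volume : Measure ℝ))
          (fun j => S j.succ) (fun j => hSm j.succ)
        rw [hρ, h1, ← h2, ← volume_pi]
      have hIH := IH U' hU't hd' (fun j => S j.succ) (fun j => hS j.succ)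
      calc (∫⁻ y, ∫⁻ x, F (e.symm (x, y)) ∂(μ 0) ∂ρ)
          ≤ ∫⁻ y, I0 * K y ∂ρ := lintegral_mono hstepA
        _ = I0 * ∫⁻ y, K y ∂ρ := lintegral_const_mul _ hKm
        _ ≤ I0 * ∏ i : Fin n, ∫⁻ t in S i.succ,
              ENNReal.ofReal (Real.exp (-(U' i i) ^ 2 * t ^ 2)) := by
            refine mul_le_mul_right ?_ _
            rw [hρeq]
            exact hIH
        _ = ∏ i : Fin (n + 1), ∫⁻ t in S i,
              ENNReal.ofReal (Real.exp (-(U i i) ^ 2 * t ^ 2)) := by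
            rw [Fin.prod_univ_succ]
            congr 1


/-- Gaussian box-integral inequality for upper triangular matrices with
positive diagonal: the integral of `exp (-‖Uξ‖₂²)` over a (possibly
partially infinite) centered box is at most the product of the
corresponding one-dimensional Gaussian integrals with variances given by
the diagonal entries. -/
theorem stmt_0 (n : ℕ) (U : Matrix (Fin n) (Fin n) ℝ)
    (hU : U.BlockTriangular id) (hd : ∀ i, 0 < U i i)
    (S : Fin n → Set ℝ)
    (hS : ∀ i, (∃ c : ℝ, 0 < c ∧ S i = Set.Icc (-c) c) ∨ S i = Set.univ) :
    (∫ ξ in Set.univ.pi S, Real.exp (-(∑ i, (U.mulVec ξ i) ^ 2)))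
      ≤ ∏ i, ∫ t in S i, Real.exp (-(U i i) ^ 2 * t ^ 2) := by
  have hL : (∫ ξ in Set.univ.pi S, Real.exp (-(∑ i, (U.mulVec ξ i) ^ 2)))
      = (∫⁻ ξ in Set.univ.pi S,
          ENNReal.ofReal (Real.exp (-(∑ i, (U.mulVec ξ i) ^ 2)))).toReal := by
    rw [integral_eq_lintegral_of_nonneg_ae
      (Filter.Eventually.of_forall fun ξ => (Real.exp_pos _).le)
      (contAux n U).aestronglyMeasurable.restrict]
  have hR : ∀ i, (∫ t in S i, Real.exp (-(U i i) ^ 2 * t ^ 2))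
      = (∫⁻ t in S i, ENNReal.ofReal (Real.exp (-(U i i) ^ 2 * t ^ 2))).toReal := by
    intro i
    rw [integral_eq_lintegral_of_nonneg_ae
      (Filter.Eventually.of_forall fun t => (Real.exp_pos _).le)
      ((by fun_prop : Continuous fun t : ℝ =>
        Real.exp (-(U i i) ^ 2 * t ^ 2)).aestronglyMeasurable.restrict)]
  have hfin : ∀ i, (∫⁻ t in S i, ENNReal.ofReal (Real.exp (-(U i i) ^ 2 * t ^ 2))) ≠ ⊤ := by
    intro i
    have hInt : Integrable fun t : ℝ => Real.exp (-(U i i) ^ 2 * t ^ 2) :=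
      integrable_exp_neg_mul_sq (pow_pos (hd i) 2)
    exact ne_of_lt (lt_of_le_of_lt (lintegral_mono' Measure.restrict_le_self le_rfl)
      hInt.lintegral_lt_top)
  rw [hL]
  calc (∫⁻ ξ in Set.univ.pi S,
          ENNReal.ofReal (Real.exp (-(∑ i, (U.mulVec ξ i) ^ 2)))).toReal
      ≤ (∏ i, ∫⁻ t in S i, ENNReal.ofReal (Real.exp (-(U i i) ^ 2 * t ^ 2))).toReal :=
        ENNReal.toReal_mono (ENNReal.prod_lt_top fun i _ => (hfin i).lt_top).ne
          (auxL n U hU hd S hS)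
    _ = ∏ i, (∫⁻ t in S i, ENNReal.ofReal (Real.exp (-(U i i) ^ 2 * t ^ 2))).toReal :=
        ENNReal.toReal_prod _ _
    _ = ∏ i, ∫ t in S i, Real.exp (-(U i i) ^ 2 * t ^ 2) :=
        Finset.prod_congr rfl fun i _ => (hR i).symm
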